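/- Let s divide n − s and identify F_2^n with F_{2^{n−s}} × F_{2^s}. Let U_∞ = F_{2^{n−s}} × {0} and for each α ∈ F_{2^{n−s}} let U_α = {(αx, x) : x ∈ F_{2^s}} (using an F_{2^s}-module structure on F_{2^{n−s}}). Then {U_∞} ∪ {U_α : α ∈ F_{2^{n−s}}} is a vector space partition of F_2^n of type [s^{2^{n−s}}, (n−s)^1], i.e., consisting of 2^{n−s} subspaces of dimension s and one subspace of dimension n−s. -/

import Mathlib

open Finset

/-- `Vec n` is the vector space `F_2^n`. -/
abbrev Vec (n : ℕ) := Fin n → ZMod 2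

/-- The standard dot product on `F_2^n`. -/
def dotp {n : ℕ} (a b : Vec n) : ZMod 2 := ∑ i, a i * b i

/-- The difference (derivative) function `D_{F,a}(x) = F(x) + F(x+a)`. -/
def Dder {n : ℕ} (F : Vec n → Vec n) (a x : Vec n) : Vec n := F x + F (x + a)

/-- The linear hyperplane `H_b = {x : ⟨b,x⟩ = 0}`. -/
def Hyp {n : ℕ} (b : Vec n) : Set (Vec n) := {x | dotp b x = 0}

/-- The affine hyperplane `H̄_b = {x : ⟨b,x⟩ = 1}`. -/
def HypBar {n : ℕ} (b : Vec n) : Set (Vec n) := {x | dotp b x = 1}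

/-- `T_b = {a : image(D_{F,a}) = H_b} ∪ {0}`. -/
def Tset {n : ℕ} (F : Vec n → Vec n) (b : Vec n) : Set (Vec n) :=
  {a | Set.range (Dder F a) = Hyp b} ∪ {0}

/-- `T̄_b = {a : image(D_{F,a}) = H̄_b}`. -/
def TsetBar {n : ℕ} (F : Vec n → Vec n) (b : Vec n) : Set (Vec n) :=
  {a | Set.range (Dder F a) = HypBar b}

/-- `V_b = T_b ∪ T̄_b`. -/
def Vset {n : ℕ} (F : Vec n → Vec n) (b : Vec n) : Set (Vec n) := Tset F b ∪ TsetBar F b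

/-- `F` is quadratic: all second derivatives are constant (algebraic degree ≤ 2). -/
def IsQuadratic {n m : ℕ} (F : Vec n → Vec m) : Prop :=
  ∀ a₁ a₂ : Vec n, ∃ c : Vec m, ∀ x, F (x + a₁ + a₂) + F (x + a₁) + F (x + a₂) + F x = c

/-- `F` is APN: every equation `F(x) + F(x+a) = b`, `a ≠ 0`, has at most 2 solutions. -/
def IsAPN {n : ℕ} (F : Vec n → Vec n) : Prop :=
  ∀ a : Vec n, a ≠ 0 → ∀ b : Vec n, Nat.card {x : Vec n // F x + F (x + a) = b} ≤ 2

/-- The Walsh transform `W_F(b,a) = Σ_x (-1)^{⟨b,F(x)⟩ + ⟨a,x⟩}`. -/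
def Walsh {n m : ℕ} (F : Vec n → Vec m) (b : Vec m) (a : Vec n) : ℤ :=
  ∑ x : Vec n, (-1 : ℤ) ^ ((dotp b (F x) + dotp a x).val)

/-- The component `F_b` is bent: `|W_F(b,a)| = 2^{n/2}` for all `a`. -/
def IsBent {n m : ℕ} (F : Vec n → Vec m) (b : Vec m) : Prop :=
  ∀ a : Vec n, (Walsh F b a) ^ 2 = 2 ^ n

/-- The set `N_F` of non-trivial non-bent components of `F`. -/
def NF {n m : ℕ} (F : Vec n → Vec m) : Set (Vec m) := {b | b ≠ 0 ∧ ¬ IsBent F b}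

/-- A vector space partition of `F_q^n`: a collection of nonzero subspaces such that
every nonzero vector lies in exactly one member. -/
def IsVSP {K : Type} [Field K] {n : ℕ} (𝒱 : Finset (Submodule K (Fin n → K))) : Prop :=
  (∀ S ∈ 𝒱, S ≠ ⊥) ∧
  ∀ x : Fin n → K, x ≠ 0 → ∃! S : Submodule K (Fin n → K), S ∈ 𝒱 ∧ x ∈ S

/-- A blocking set of `PG(m,2)` (identified with `F_2^{m+1} \ {0}`) with respect to
`k`-spaces (nonzero parts of `(k+1)`-dimensional subspaces). -/
def PGBlocking (m k : ℕ) (B : Set (Fin (m + 1) → ZMod 2)) : Prop :=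
  0 ∉ B ∧ ∀ S : Submodule (ZMod 2) (Fin (m + 1) → ZMod 2),
    Module.finrank (ZMod 2) S = k + 1 → ∃ x ∈ B, x ∈ S

/-- `F_b` has amplitude `2^{(n+k)/2}`. -/
def HasAmp {n m : ℕ} (F : Vec n → Vec m) (b : Vec m) (k : ℕ) : Prop :=
  (∀ a, (Walsh F b a) ^ 2 = 0 ∨ (Walsh F b a) ^ 2 = 2 ^ (n + k)) ∧
  ∃ a, (Walsh F b a) ^ 2 = 2 ^ (n + k)

theorem stmt_13 {n s : ℕ} (hs : 0 < s) (hsn : s < n) (hdvd : s ∣ (n - s))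
    (φ : GaloisField 2 s →+* GaloisField 2 (n - s)) :
    (∀ p : GaloisField 2 (n - s) × GaloisField 2 s, p ≠ 0 →
      ((p ∈ ({q : GaloisField 2 (n - s) × GaloisField 2 s | q.2 = 0}) ∧
        ∀ α : GaloisField 2 (n - s),
          p ∉ {q : GaloisField 2 (n - s) × GaloisField 2 s | q.1 = α * φ q.2}) ∨
       (p ∉ ({q : GaloisField 2 (n - s) × GaloisField 2 s | q.2 = 0}) ∧
        ∃! α : GaloisField 2 (n - s),
          p ∈ {q : GaloisField 2 (n - s) × GaloisField 2 s | q.1 = α * φ q.2}))) ∧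
    (∃ S : Submodule (ZMod 2) (GaloisField 2 (n - s) × GaloisField 2 s),
      (S : Set (GaloisField 2 (n - s) × GaloisField 2 s)) =
        {q | q.2 = 0} ∧ Nat.card S = 2 ^ (n - s)) ∧
    (∀ α : GaloisField 2 (n - s),
      ∃ S : Submodule (ZMod 2) (GaloisField 2 (n - s) × GaloisField 2 s),
        (S : Set (GaloisField 2 (n - s) × GaloisField 2 s)) =
          {q | q.1 = α * φ q.2} ∧ Nat.card S = 2 ^ s) := by
  have hns : n - s ≠ 0 := Nat.sub_ne_zero_of_lt hsn
  have hφ : Function.Injective φ := φ.injective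
  refine ⟨?_, ?_, ?_⟩
  · intro p hp
    by_cases h2 : p.2 = 0
    · left
      refine ⟨h2, fun α hα => ?_⟩
      simp only [Set.mem_setOf_eq, h2, map_zero, mul_zero] at hα
      exact hp (Prod.ext hα h2)
    · right
      have hφ2 : φ p.2 ≠ 0 := fun h => h2 (hφ (by simpa using h))
      refine ⟨h2, p.1 * (φ p.2)⁻¹, ?_, ?_⟩
      · simp only [Set.mem_setOf_eq]
        field_simp
      · intro α hα
        simp only [Set.mem_setOf_eq] at hα
        field_simp [hα]
        exact hα.symm
  · refine ⟨LinearMap.ker (LinearMap.snd (ZMod 2) (GaloisField 2 (n - s)) (GaloisField 2 s)), ?_, ?_⟩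
    · ext q; simp [LinearMap.mem_ker]
    · have e : (LinearMap.ker (LinearMap.snd (ZMod 2) (GaloisField 2 (n - s)) (GaloisField 2 s))) ≃ GaloisField 2 (n - s) :=
        { toFun := fun q => q.1.1
          invFun := fun x => ⟨(x, 0), by simp [LinearMap.mem_ker]⟩
          left_inv := by
            rintro ⟨⟨a, b⟩, hq⟩
            simp only [LinearMap.mem_ker, LinearMap.snd_apply] at hq
            simp [hq]
          right_inv := fun x => rfl }
      rw [Nat.card_congr e, GaloisField.card 2 (n - s) hns]
  · intro α
    let f : GaloisField 2 (n - s) × GaloisField 2 s →+ GaloisField 2 (n - s) :=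
      { toFun := fun q => q.1 - α * φ q.2
        map_zero' := by simp
        map_add' := by intro a b; simp [map_add]; ring }
    refine ⟨LinearMap.ker (f.toZModLinearMap 2), ?_, ?_⟩
    · ext q
      simp only [SetLike.mem_coe, LinearMap.mem_ker, AddMonoidHom.coe_toZModLinearMap,
        Set.mem_setOf_eq, f, AddMonoidHom.coe_mk, ZeroHom.coe_mk, sub_eq_zero]
    · have e : (LinearMap.ker (f.toZModLinearMap 2)) ≃ GaloisField 2 s :=
        { toFun := fun q => q.1.2
          invFun := fun x => ⟨(α * φ x, x), by
            simp [LinearMap.mem_ker, f]⟩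
          left_inv := by
            rintro ⟨⟨a, b⟩, hq⟩
            simp only [LinearMap.mem_ker, AddMonoidHom.coe_toZModLinearMap, f,
              AddMonoidHom.coe_mk, ZeroHom.coe_mk, sub_eq_zero] at hq
            simp [hq]
          right_inv := fun x => rfl }
      rw [Nat.card_congr e, GaloisField.card 2 s hs.ne']
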